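/- Let Γ be a player-specific congestion game on a circle with n ≥ 3 players in which every player is of type 3. Then Γ has exactly two Nash equilibria: the state in which all players play their 0-strategy and the state in which all players play their 1-strategy. -/

import Mathlib

open scoped ENNReal NNReal

/-- A player-specific singleton congestion game on a circle with `n` players:
the resources are `0, …, n-1`, and player `i` chooses between resource `i`
(its 0-strategy, with delay function `d0 i`) and resource `i+1 (mod n)`
(its 1-strategy, with delay function `d1 i`). The delay functions are strictly
increasing and ties are broken (for each player the delays of its two resources
at congestions `1 ≤ k ≤ n` are pairwise distinct). -/
structure CircleGame (n : ℕ) where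
  d0 : Fin n → ℕ → ℕ
  d1 : Fin n → ℕ → ℕ
  mono0 : ∀ i, StrictMono (d0 i)
  mono1 : ∀ i, StrictMono (d1 i)
  tie : ∀ i : Fin n, ∀ k, 1 ≤ k → k ≤ n → ∀ k', 1 ≤ k' → k' ≤ n → d0 i k ≠ d1 i k'

namespace CircleGame

variable {n : ℕ} [NeZero n]

/-- A state is a function `s : Fin n → Bool`: `s i = false` iff player `i` plays its
0-strategy (resource `i`), and `s i = true` iff it plays its 1-strategy (resource `i+1`).
`cong s r` is the congestion of resource `r`: resource `r` is allocated by player `r`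
(if it plays its 0-strategy) and by player `r-1` (if it plays its 1-strategy). -/
def cong (s : Fin n → Bool) (r : Fin n) : ℕ :=
  (if s r = false then 1 else 0) + (if s (r - 1) = true then 1 else 0)

/-- The current resource of player `i` is a best response to state `s`. -/
def CurrentBR (G : CircleGame n) (s : Fin n → Bool) (i : Fin n) : Prop :=
  if s i = false then G.d0 i (cong s i) ≤ G.d1 i (cong s (i + 1) + 1)
  else G.d1 i (cong s (i + 1)) ≤ G.d0 i (cong s i + 1)

/-- One best-response step: a player whose current resource is not a best response
switches to its (unique) other resource, which is then its best response. -/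
def Step (G : CircleGame n) (s s' : Fin n → Bool) : Prop :=
  ∃ i, ¬ G.CurrentBR s i ∧ s' = Function.update s i (!(s i))

/-- Nash equilibrium: every player's current resource is a best response. -/
def IsNash (G : CircleGame n) (s : Fin n → Bool) : Prop := ∀ i, G.CurrentBR s i

/-- type 1 : `d_{r_i}(1) < d_{r_i}(2) < d_{r_{i+1}}(1) < d_{r_{i+1}}(2)`. -/
def IsType1 (G : CircleGame n) (i : Fin n) : Prop :=
  G.d0 i 1 < G.d0 i 2 ∧ G.d0 i 2 < G.d1 i 1 ∧ G.d1 i 1 < G.d1 i 2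

/-- type 1' : roles of the two resources exchanged. -/
def IsType1' (G : CircleGame n) (i : Fin n) : Prop :=
  G.d1 i 1 < G.d1 i 2 ∧ G.d1 i 2 < G.d0 i 1 ∧ G.d0 i 1 < G.d0 i 2

/-- type 2 : `d_{r_i}(1) < d_{r_{i+1}}(1) < d_{r_i}(2) < d_{r_{i+1}}(2)`. -/
def IsType2 (G : CircleGame n) (i : Fin n) : Prop :=
  G.d0 i 1 < G.d1 i 1 ∧ G.d1 i 1 < G.d0 i 2 ∧ G.d0 i 2 < G.d1 i 2

/-- type 2' : roles of the two resources exchanged. -/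
def IsType2' (G : CircleGame n) (i : Fin n) : Prop :=
  G.d1 i 1 < G.d0 i 1 ∧ G.d0 i 1 < G.d1 i 2 ∧ G.d1 i 2 < G.d0 i 2

/-- type 3 : `d_{r_i}(1) < d_{r_{i+1}}(1) < d_{r_{i+1}}(2) < d_{r_i}(2)`. -/
def IsType3 (G : CircleGame n) (i : Fin n) : Prop :=
  G.d0 i 1 < G.d1 i 1 ∧ G.d1 i 1 < G.d1 i 2 ∧ G.d1 i 2 < G.d0 i 2

/-- type 3' : roles of the two resources exchanged. -/
def IsType3' (G : CircleGame n) (i : Fin n) : Prop :=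
  G.d1 i 1 < G.d0 i 1 ∧ G.d0 i 1 < G.d0 i 2 ∧ G.d0 i 2 < G.d1 i 2

/-- Resource `r_i` is a termination point for overload tokens: the pair of types of
players `i-1` and `i` is one of `(2',2), (3,3'), (3,2), (2',3')`. -/
def OverloadTP (G : CircleGame n) (i : Fin n) : Prop :=
  (G.IsType2' (i - 1) ∧ G.IsType2 i) ∨ (G.IsType3 (i - 1) ∧ G.IsType3' i) ∨
  (G.IsType3 (i - 1) ∧ G.IsType2 i) ∨ (G.IsType2' (i - 1) ∧ G.IsType3' i)

/-- Resource `r_i` is a termination point for underload tokens: the pair of types of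
players `i-1` and `i` is one of `(2,2'), (3,3'), (2,3'), (3,2')`. -/
def UnderloadTP (G : CircleGame n) (i : Fin n) : Prop :=
  (G.IsType2 (i - 1) ∧ G.IsType2' i) ∨ (G.IsType3 (i - 1) ∧ G.IsType3' i) ∨
  (G.IsType2 (i - 1) ∧ G.IsType3' i) ∨ (G.IsType3 (i - 1) ∧ G.IsType2' i)

open scoped Classical in
/-- The set of players whose current resource is not a best response. -/
noncomputable def unsat (G : CircleGame n) (s : Fin n → Bool) : Finset (Fin n) :=
  Finset.univ.filter fun i => ¬ G.CurrentBR s i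

/-- One step of the random best response dynamics: in a state that is not a Nash
equilibrium, a player whose current resource is not a best response is selected
uniformly at random and switches to its best response; Nash equilibria are absorbing. -/
noncomputable def stepPMF (G : CircleGame n) (s : Fin n → Bool) : PMF (Fin n → Bool) :=
  if h : (G.unsat s).Nonempty then
    (PMF.uniformOfFinset (G.unsat s) h).bind fun i => PMF.pure (Function.update s i (!(s i)))
  else PMF.pure s

/-- The distribution of the random best response dynamics after `t` steps, started in `s`. -/
noncomputable def walk (G : CircleGame n) (s : Fin n → Bool) : ℕ → PMF (Fin n → Bool)
  | 0 => PMF.pure s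
  | t + 1 => (walk G s t).bind G.stepPMF

open scoped Classical in
/-- The expected number of steps until the random best response dynamics started in `s`
reaches a Nash equilibrium: since Nash equilibria are absorbing, this is
`∑_{t ≥ 0} Pr[X_t is not a Nash equilibrium]`. -/
noncomputable def expTime (G : CircleGame n) (s : Fin n → Bool) : ℝ≥0∞ :=
  ∑' t : ℕ, ∑ s' ∈ Finset.univ.filter (fun s' => ¬ G.IsNash s'), G.walk s t s'

end CircleGame

/-- A player-specific congestion game on a circle with `n ≥ 3` players in
which every player is of type 3 has exactly two Nash equilibria: the state in which all
players play their 0-strategy and the state in which all players play their 1-strategy. -/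
theorem circle_type3_exactly_two_nash
    (n : ℕ) [NeZero n] (hn : 3 ≤ n) (G : CircleGame n)
    (h3 : ∀ i, G.IsType3 i) (s : Fin n → Bool) :
    G.IsNash s ↔ ((∀ i, s i = false) ∨ (∀ i, s i = true)) := by
  letI := Fin.instCommRing n
  constructor
  · intro hN
    by_contra hc
    push_neg at hc
    obtain ⟨⟨j, hj⟩, ⟨k, hk⟩⟩ := hc
    replace hj : s j = true := by simpa using hj
    replace hk : s k = false := by simpa using hk
    have key : ∃ i : Fin n, s (i - 1) = true ∧ s i = false := by
      by_contra h
      push_neg at h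
      have hall : ∀ m : ℕ, s (j + (m : Fin n)) = true := by
        intro m
        induction m with
        | zero => simpa using hj
        | succ m ih =>
          have h1 : (j + ((m + 1 : ℕ) : Fin n)) - 1 = j + (m : Fin n) := by
            push_cast; ring
          have h2 := h (j + ((m + 1 : ℕ) : Fin n)) (by rw [h1]; exact ih)
          simpa using h2
      have := hall (k - j).val
      rw [Fin.cast_val_eq_self] at this
      have hk' : j + (k - j) = k := by ring
      rw [hk', hk] at this
      exact Bool.false_ne_true this
    obtain ⟨i, hprev, hi⟩ := key
    have hcong : CircleGame.cong s i = 2 := by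
      unfold CircleGame.cong
      rw [hi, hprev]
      simp
    have hcong2 : CircleGame.cong s (i + 1) ≤ 1 := by
      unfold CircleGame.cong
      have : (i + 1 : Fin n) - 1 = i := by ring
      rw [this, hi]
      simp only [Bool.false_eq_true, if_false, add_zero]
      split <;> omega
    have hbr := hN i
    unfold CircleGame.IsNash CircleGame.CurrentBR at hbr
    rw [hi] at hbr
    simp only [if_true] at hbr
    rw [hcong] at hbr
    have h1 : G.d1 i (CircleGame.cong s (i + 1) + 1) ≤ G.d1 i 2 :=
      (G.mono1 i).monotone (by omega)
    have h2 : G.d1 i 2 < G.d0 i 2 := (h3 i).2.2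
    omega
  · intro hc i
    unfold CircleGame.CurrentBR
    have hi1 : (i + 1 : Fin n) - 1 = i := by ring
    rcases hc with hall | hall
    · have hcong : CircleGame.cong s i = 1 := by
        unfold CircleGame.cong
        rw [hall i, hall (i - 1)]
        simp
      have hcong2 : CircleGame.cong s (i + 1) = 1 := by
        unfold CircleGame.cong
        rw [hi1, hall (i + 1), hall i]
        simp
      rw [hall i, hcong, hcong2]
      simp only [if_true]
      exact le_of_lt ((h3 i).1.trans (h3 i).2.1)
    · have hcong : CircleGame.cong s i = 1 := by
        unfold CircleGame.cong
        rw [hall i, hall (i - 1)]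
        simp
      have hcong2 : CircleGame.cong s (i + 1) = 1 := by
        unfold CircleGame.cong
        rw [hi1, hall (i + 1), hall i]
        simp
      rw [hall i, hcong, hcong2]
      simp only [Bool.true_eq_false, if_false]
      exact le_of_lt ((h3 i).2.1.trans (h3 i).2.2)
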